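/- There exist binary-input binary-output channels P_{U|X} and P_{V|X} (2×2 stochastic matrices) such that P_{V|X} is not a degraded version of P_{U|X} (i.e., there is no 2×2 stochastic matrix M with P_{V|X} = P_{U|X} M), yet P_{U|X} is more informative than P_{V|X}: for every joint distribution P_{YX} on a finite set Y times {0,1} inducing the Markov chain Y ↔ X ↔ (U,V), one has I(Y;U) ≥ I(Y;V). -/

import Mathlib

open Finset

/-- A probability vector on a finite set. -/
def ProbFun {A : Type*} [Fintype A] (p : A → ℝ) : Prop :=
  (∀ a, 0 ≤ p a) ∧ ∑ a, p a = 1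

/-- A joint probability on finite sets. -/
def JointFun {A B : Type*} [Fintype A] [Fintype B] (p : A → B → ℝ) : Prop :=
  (∀ a b, 0 ≤ p a b) ∧ ∑ a, ∑ b, p a b = 1

/-- A Markov kernel (stochastic matrix) from `A` to `B`. -/
def Kern {A B : Type*} [Fintype B] (K : A → B → ℝ) : Prop :=
  (∀ a b, 0 ≤ K a b) ∧ ∀ a, ∑ b, K a b = 1

/-- Composition of kernels: `(M ∘ K)(v|x) = ∑ u K(u|x) M(v|u)`. -/
def kcomp {X U V : Type*} [Fintype U] (M : U → V → ℝ) (K : X → U → ℝ) : X → V → ℝ :=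
  fun x v => ∑ u, K x u * M u v

/-- Pushforward of a distribution through a kernel. -/
def kpush {X U : Type*} [Fintype X] (K : X → U → ℝ) (q : X → ℝ) : U → ℝ :=
  fun u => ∑ x, q x * K x u

/-- Mutual information of a finite joint pmf. -/
noncomputable def MIfin {A B : Type*} [Fintype A] [Fintype B] (p : A → B → ℝ) : ℝ :=
  ∑ a, ∑ b, p a b * Real.log (p a b / ((∑ b', p a b') * (∑ a', p a' b)))

/-- Joint distribution of concept `Y` and embedding, for a joint `p` on `Y × X`
and a channel `K` from `X` (this encodes the Markov chain `Y ↔ X ↔ U`). -/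
def jointOut {Y X U : Type*} [Fintype X] (p : Y → X → ℝ) (K : X → U → ℝ) : Y → U → ℝ :=
  fun y u => ∑ x, p y x * K x u

/-- Total variation distance on a finite set. -/
noncomputable def tvDist {A : Type*} [Fintype A] (p q : A → ℝ) : ℝ :=
  (∑ a, |p a - q a|) / 2

/-- Bayes risk: infimum over randomized decision rules of the error probability. -/
noncomputable def bayesRisk {Y U : Type*} [Fintype Y] [Fintype U] (r : Y → U → ℝ) : ℝ :=
  sInf { e | ∃ ρ : U → Y → ℝ, Kern ρ ∧ e = 1 - ∑ y, ∑ u, r y u * ρ u y }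

/-- Le Cam deficiency of `KV` relative to `KU` under input distribution `pX`. -/
noncomputable def deficiency {X U V : Type*} [Fintype X] [Fintype U] [Fintype V]
    (pX : X → ℝ) (KU : X → U → ℝ) (KV : X → V → ℝ) : ℝ :=
  sInf { d | ∃ M : U → V → ℝ, Kern M ∧ d = ∑ x, pX x * tvDist (kcomp M KU x) (KV x) }

/-- Kullback–Leibler divergence on a finite set, `⊤` if absolute continuity fails. -/
noncomputable def KLfin {A : Type*} [Fintype A] (p q : A → ℝ) : EReal :=
  if ∀ a, q a = 0 → p a = 0 then ((∑ a, p a * Real.log (p a / q a) : ℝ) : EReal) else ⊤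


noncomputable def Faux (x t : ℝ) : ℝ :=
  -x * Real.log t - (1 - x) * Real.log (1 - t) + (x - 1/5) * Real.log (t - 1/5)
    + (6/5 - x) * Real.log (6/5 - t)

lemma Faux_hasDeriv (x t : ℝ) (h1 : (1:ℝ)/2 < t) (h2 : t < 1) :
    HasDerivAt (Faux x)
      (-x / t + (1 - x) / (1 - t) + (x - 1/5) / (t - 1/5) - (6/5 - x) / (6/5 - t)) t := by
  have ht : t ≠ 0 := by linarith
  have h1t : (1:ℝ) - t ≠ 0 := by linarith
  have htc : t - 1/5 ≠ 0 := by linarith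
  have h65 : (6:ℝ)/5 - t ≠ 0 := by linarith
  have A : HasDerivAt (fun u : ℝ => Real.log u) t⁻¹ t := Real.hasDerivAt_log ht
  have B : HasDerivAt (fun u : ℝ => Real.log (1 - u)) (-(1 - t)⁻¹) t := by
    have := (Real.hasDerivAt_log h1t).comp t ((hasDerivAt_id t).const_sub 1)
    simpa [Function.comp_def] using this
  have C : HasDerivAt (fun u : ℝ => Real.log (u - 1/5)) (t - 1/5)⁻¹ t := by
    have := (Real.hasDerivAt_log htc).comp t ((hasDerivAt_id t).sub_const (1/5))
    simpa [Function.comp_def] using this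
  have D : HasDerivAt (fun u : ℝ => Real.log (6/5 - u)) (-(6/5 - t)⁻¹) t := by
    have := (Real.hasDerivAt_log h65).comp t ((hasDerivAt_id t).const_sub (6/5))
    simpa [Function.comp_def] using this
  have h := (((A.const_mul (-x)).sub (B.const_mul (1 - x))).add (C.const_mul (x - 1/5))).add
    (D.const_mul (6/5 - x))
  refine h.congr_deriv ?_
  ring

lemma frac_eq (x t : ℝ) (h1 : (1:ℝ)/2 < t) (h2 : t < 1) :
    -x / t + (1 - x) / (1 - t) + (x - 1/5) / (t - 1/5) - (6/5 - x) / (6/5 - t)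
      = (x - t) / (5*(t*(t - 1/5))) + (t - x) / (5*((1 - t)*(6/5 - t))) := by
  have ht : t ≠ 0 := by linarith
  have h1t : (1:ℝ) - t ≠ 0 := by linarith
  have htc : t - 1/5 ≠ 0 := by linarith
  have h65 : (6:ℝ)/5 - t ≠ 0 := by linarith
  have d1 : (5:ℝ)*(t*(t - 1/5)) ≠ 0 := by
    intro h; rcases mul_eq_zero.1 h with h' | h'; · norm_num at h'
    rcases mul_eq_zero.1 h' with h'' | h'' <;> [exact ht h''; exact htc h'']
  have d2 : (5:ℝ)*((1 - t)*(6/5 - t)) ≠ 0 := by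
    intro h; rcases mul_eq_zero.1 h with h' | h'; · norm_num at h'
    rcases mul_eq_zero.1 h' with h'' | h'' <;> [exact h1t h''; exact h65 h'']
  have e1 : -x / t + (x - 1/5) / (t - 1/5) = (x - t) / (5*(t*(t - 1/5))) := by
    rw [div_add_div _ _ ht htc, div_eq_div_iff (mul_ne_zero ht htc) d1]
    ring
  have e2 : (1 - x) / (1 - t) - (6/5 - x) / (6/5 - t) = (t - x) / (5*((1 - t)*(6/5 - t))) := by
    rw [div_sub_div _ _ h1t h65, div_eq_div_iff (mul_ne_zero h1t h65) d2]
    ring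
  rw [← e1, ← e2]
  ring

lemma deriv_nonneg_aux (x t : ℝ) (hx : x ≤ t) (h1 : (7:ℝ)/10 ≤ t) (h2 : t ≤ 9/10) :
    0 ≤ -x / t + (1 - x) / (1 - t) + (x - 1/5) / (t - 1/5) - (6/5 - x) / (6/5 - t) := by
  rw [frac_eq x t (by linarith) (by linarith)]
  have key : (t - x) / (5*(t*(t - 1/5))) ≤ (t - x) / (5*((1 - t)*(6/5 - t))) :=
    div_le_div_of_nonneg_left (by linarith) (by nlinarith) (by nlinarith)
  have e : (x - t) / (5*(t*(t - 1/5))) = -((t - x) / (5*(t*(t - 1/5)))) := by ring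
  linarith [e, key]

lemma deriv_nonpos_aux (x t : ℝ) (hx : t ≤ x) (h1 : (7:ℝ)/10 ≤ t) (h2 : t ≤ 9/10) :
    -x / t + (1 - x) / (1 - t) + (x - 1/5) / (t - 1/5) - (6/5 - x) / (6/5 - t) ≤ 0 := by
  rw [frac_eq x t (by linarith) (by linarith)]
  have key : (x - t) / (5*(t*(t - 1/5))) ≤ (x - t) / (5*((1 - t)*(6/5 - t))) :=
    div_le_div_of_nonneg_left (by linarith) (by nlinarith) (by nlinarith)
  have e : (t - x) / (5*((1 - t)*(6/5 - t))) = -((x - t) / (5*((1 - t)*(6/5 - t)))) := by ring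
  linarith [e, key]

lemma Faux_le (x y : ℝ) (hx1 : 7/10 ≤ x) (hx2 : x ≤ 9/10)
    (hy1 : 7/10 ≤ y) (hy2 : y ≤ 9/10) : Faux x x ≤ Faux x y := by
  rcases le_total x y with hxy | hxy
  · have mono : MonotoneOn (Faux x) (Set.Icc x (9/10)) := by
      apply monotoneOn_of_deriv_nonneg (convex_Icc _ _)
      · intro t ht
        exact (Faux_hasDeriv x t (by have := ht.1; linarith)
          (by have := ht.2; linarith)).continuousAt.continuousWithinAt
      · intro t ht
        rw [interior_Icc] at ht
        exact (Faux_hasDeriv x t (by have := ht.1; linarith)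
          (by have := ht.2; linarith)).differentiableAt.differentiableWithinAt
      · intro t ht
        rw [interior_Icc] at ht
        have h1 : (1:ℝ)/2 < t := by have := ht.1; linarith
        have h2 : t < 1 := by have := ht.2; linarith
        rw [(Faux_hasDeriv x t h1 h2).deriv]
        exact deriv_nonneg_aux x t (le_of_lt ht.1) (by linarith [ht.1]) (le_of_lt ht.2)
    exact mono ⟨le_rfl, hx2⟩ ⟨hxy, hy2⟩ hxy
  · have anti : AntitoneOn (Faux x) (Set.Icc (7/10) x) := by
      apply antitoneOn_of_deriv_nonpos (convex_Icc _ _)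
      · intro t ht
        exact (Faux_hasDeriv x t (by have := ht.1; linarith)
          (by have := ht.2; linarith)).continuousAt.continuousWithinAt
      · intro t ht
        rw [interior_Icc] at ht
        exact (Faux_hasDeriv x t (by have := ht.1; linarith)
          (by have := ht.2; linarith)).differentiableAt.differentiableWithinAt
      · intro t ht
        rw [interior_Icc] at ht
        have h1 : (1:ℝ)/2 < t := by have := ht.1; linarith
        have h2 : t < 1 := by have := ht.2; linarith
        rw [(Faux_hasDeriv x t h1 h2).deriv]
        exact deriv_nonpos_aux x t (le_of_lt ht.2) (le_of_lt ht.1) (by linarith [ht.2])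
    exact anti ⟨hy1, hxy⟩ ⟨hx1, le_rfl⟩ hxy

lemma d_ineq (x y : ℝ) (hx1 : 7/10 ≤ x) (hx2 : x ≤ 9/10)
    (hy1 : 7/10 ≤ y) (hy2 : y ≤ 9/10) :
    (x - 1/5) * Real.log ((x - 1/5) / (y - 1/5)) + (6/5 - x) * Real.log ((6/5 - x) / (6/5 - y))
      ≤ x * Real.log (x / y) + (1 - x) * Real.log ((1 - x) / (1 - y)) := by
  have h := Faux_le x y hx1 hx2 hy1 hy2
  unfold Faux at h
  rw [Real.log_div (by linarith) (by linarith), Real.log_div (by linarith) (by linarith),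
    Real.log_div (by linarith) (by linarith), Real.log_div (by linarith) (by linarith)]
  nlinarith [h]

lemma key_ineq (q s S : ℝ) (hq : 0 ≤ q) (h1 : 7/10 * q ≤ s) (h2 : s ≤ 9/10 * q)
    (hS1 : (7:ℝ)/10 ≤ S) (hS2 : S ≤ 9/10) :
    (s - q/5) * Real.log ((s - q/5) / (q * (S - 1/5)))
      + (q - s + q/5) * Real.log ((q - s + q/5) / (q * (6/5 - S)))
    ≤ s * Real.log (s / (q * S)) + (q - s) * Real.log ((q - s) / (q * (1 - S))) := by
  rcases eq_or_lt_of_le hq with hq0 | hq'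
  · have hs0 : s = 0 := le_antisymm (by linarith) (by linarith)
    simp [← hq0, hs0]
  · have hqne : q ≠ 0 := ne_of_gt hq'
    have hx1 : 7/10 ≤ s / q := (le_div_iff₀ hq').mpr (by linarith)
    have hx2 : s / q ≤ 9/10 := (div_le_iff₀ hq').mpr (by linarith)
    have hd := d_ineq (s / q) S hx1 hx2 hS1 hS2
    have hSne : S - 1/5 ≠ 0 := by intro h; nlinarith
    have hSne2 : (6:ℝ)/5 - S ≠ 0 := by intro h; nlinarith
    have hSne3 : S ≠ 0 := by intro h; nlinarith
    have hSne4 : (1:ℝ) - S ≠ 0 := by intro h; nlinarith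
    have e1 : (s / q - 1/5) / (S - 1/5) = (s - q/5) / (q * (S - 1/5)) := by
      rw [div_eq_div_iff hSne (mul_ne_zero hqne hSne)]; field_simp; try ring
    have e2 : (6/5 - s / q) / (6/5 - S) = (q - s + q/5) / (q * (6/5 - S)) := by
      rw [div_eq_div_iff hSne2 (mul_ne_zero hqne hSne2)]; field_simp; try ring
    have e3 : (s / q) / S = s / (q * S) := by
      rw [div_eq_div_iff hSne3 (mul_ne_zero hqne hSne3)]; field_simp; try ring
    have e4 : (1 - s / q) / (1 - S) = (q - s) / (q * (1 - S)) := by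
      rw [div_eq_div_iff hSne4 (mul_ne_zero hqne hSne4)]; field_simp; try ring
    rw [e1, e2, e3, e4] at hd
    have hmul := mul_le_mul_of_nonneg_left hd (le_of_lt hq')
    have g1 : q * ((s / q - 1/5) * Real.log ((s - q/5) / (q * (S - 1/5)))
        + (6/5 - s / q) * Real.log ((q - s + q/5) / (q * (6/5 - S))))
        = (s - q/5) * Real.log ((s - q/5) / (q * (S - 1/5)))
          + (q - s + q/5) * Real.log ((q - s + q/5) / (q * (6/5 - S))) := by
      field_simp; try ring
    have g2 : q * ((s / q) * Real.log (s / (q * S))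
        + (1 - s / q) * Real.log ((q - s) / (q * (1 - S))))
        = s * Real.log (s / (q * S)) + (q - s) * Real.log ((q - s) / (q * (1 - S))) := by
      field_simp; try ring
    rw [g1, g2] at hmul
    exact hmul

lemma MI_rw {Y : Type} [Fintype Y] (r : Y → Fin 2 → ℝ) :
    MIfin r = ∑ y, (r y 0 * Real.log (r y 0 / ((r y 0 + r y 1) * (∑ y', r y' 0)))
      + r y 1 * Real.log (r y 1 / ((r y 0 + r y 1) * (∑ y', r y' 1)))) := by
  unfold MIfin
  refine Finset.sum_congr rfl fun y _ => ?_
  simp only [Fin.sum_univ_two]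

/-- informativeness does not imply sufficiency (Körner–Marton example). -/
theorem stmt1 : ∃ KU KV : Fin 2 → Fin 2 → ℝ, Kern KU ∧ Kern KV ∧
    (¬ ∃ M : Fin 2 → Fin 2 → ℝ, Kern M ∧ kcomp M KU = KV) ∧
    (∀ (Y : Type) [Fintype Y] (p : Y → Fin 2 → ℝ), JointFun p →
      MIfin (jointOut p KV) ≤ MIfin (jointOut p KU)) := by
  refine ⟨![![9/10, 1/10], ![7/10, 3/10]], ![![7/10, 3/10], ![1/2, 1/2]],
    ⟨?_, ?_⟩, ⟨?_, ?_⟩, ?_, ?_⟩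
  · intro a b; fin_cases a <;> fin_cases b <;> norm_num
  · intro a; fin_cases a <;> norm_num [Fin.sum_univ_two]
  · intro a b; fin_cases a <;> fin_cases b <;> norm_num
  · intro a; fin_cases a <;> norm_num [Fin.sum_univ_two]
  · rintro ⟨M, ⟨hMn, hMs⟩, hEq⟩
    have h0 := congrFun (congrFun hEq 0) 0
    have h1 := congrFun (congrFun hEq 1) 0
    simp [kcomp, Fin.sum_univ_two] at h0 h1
    have := hMn 1 0
    linarith
  · intro Y _ p hp
    set q : Y → ℝ := fun y => p y 0 + p y 1 with hqdef
    set s : Y → ℝ := fun y => 9/10 * p y 0 + 7/10 * p y 1 with hsdef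
    set S : ℝ := ∑ y, s y with hSdef
    have hpn : ∀ y x, 0 ≤ p y x := hp.1
    have hsum : ∑ y, q y = 1 := by
      have := hp.2
      simp only [Fin.sum_univ_two] at this
      simpa [hqdef] using this
    have hql : ∀ y, 0 ≤ q y := fun y => add_nonneg (hpn y 0) (hpn y 1)
    have hs1 : ∀ y, 7/10 * q y ≤ s y := by
      intro y
      simp only [hqdef, hsdef]
      linarith [hpn y 0]
    have hs2 : ∀ y, s y ≤ 9/10 * q y := by
      intro y
      simp only [hqdef, hsdef]
      linarith [hpn y 1]
    have hS1 : (7:ℝ)/10 ≤ S := by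
      have : ∑ y, (7:ℝ)/10 * q y ≤ ∑ y, s y := Finset.sum_le_sum fun y _ => hs1 y
      rw [← Finset.mul_sum, hsum] at this
      simpa [hSdef] using this
    have hS2 : S ≤ 9/10 := by
      have : ∑ y, s y ≤ ∑ y, (9:ℝ)/10 * q y := Finset.sum_le_sum fun y _ => hs2 y
      rw [← Finset.mul_sum, hsum] at this
      simpa [hSdef] using this
    have eU0 : ∀ y, jointOut p ![![(9:ℝ)/10, 1/10], ![7/10, 3/10]] y 0 = s y := by
      intro y
      simp [jointOut, Fin.sum_univ_two, hsdef]
      ring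
    have eU1 : ∀ y, jointOut p ![![(9:ℝ)/10, 1/10], ![7/10, 3/10]] y 1 = q y - s y := by
      intro y
      simp [jointOut, Fin.sum_univ_two, hsdef, hqdef]
      ring
    have eV0 : ∀ y, jointOut p ![![(7:ℝ)/10, 3/10], ![1/2, 1/2]] y 0 = s y - q y / 5 := by
      intro y
      simp [jointOut, Fin.sum_univ_two, hsdef, hqdef]
      ring
    have eV1 : ∀ y, jointOut p ![![(7:ℝ)/10, 3/10], ![1/2, 1/2]] y 1
        = q y - s y + q y / 5 := by
      intro y
      simp [jointOut, Fin.sum_univ_two, hsdef, hqdef]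
      ring
    have hmU0 : ∑ y, jointOut p ![![(9:ℝ)/10, 1/10], ![7/10, 3/10]] y 0 = S :=
      (Finset.sum_congr rfl fun y _ => eU0 y).trans hSdef.symm
    have hmU1 : ∑ y, jointOut p ![![(9:ℝ)/10, 1/10], ![7/10, 3/10]] y 1 = 1 - S := by
      rw [Finset.sum_congr rfl fun y _ => eU1 y, Finset.sum_sub_distrib, hsum, ← hSdef]
    have hmV0 : ∑ y, jointOut p ![![(7:ℝ)/10, 3/10], ![1/2, 1/2]] y 0 = S - 1/5 := by
      rw [Finset.sum_congr rfl fun y _ => eV0 y, Finset.sum_sub_distrib, ← Finset.sum_div,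
        hsum, ← hSdef]
    have hmV1 : ∑ y, jointOut p ![![(7:ℝ)/10, 3/10], ![1/2, 1/2]] y 1 = 6/5 - S := by
      have h : ∀ y, q y - s y + q y / 5 = (6:ℝ)/5 * q y - s y := fun y => by ring
      rw [Finset.sum_congr rfl fun y _ => (eV1 y).trans (h y), Finset.sum_sub_distrib,
        ← Finset.mul_sum, hsum, ← hSdef]
      norm_num
    rw [MI_rw, MI_rw, hmU0, hmU1, hmV0, hmV1]
    refine Finset.sum_le_sum fun y _ => ?_
    rw [eU0 y, eU1 y, eV0 y, eV1 y]
    have r1 : s y + (q y - s y) = q y := by ring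
    have r2 : s y - q y / 5 + (q y - s y + q y / 5) = q y := by ring
    rw [r1, r2]
    exact key_ineq (q y) (s y) S (hql y) (hs1 y) (hs2 y) hS1 hS2
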